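/- Let s ≥ r ≥ 1 and 0 < δ < 1. Then RT_s(n, K_{s+r}, n^δ) < n^{2-(1-δ)²/(r-δ)} if (r-δ)/(1-δ) is an integer, and RT_s(n, K_{s+r}, n^δ) < n^{2-(1-δ)²/(r+1-2δ)} otherwise. Equivalently, every K_{s+r}-free graph G on n vertices with at least n^{2-(1-δ)/⌈(r-δ)/(1-δ)⌉} edges satisfies α_s(G) ≥ n^δ. -/

import Mathlib

open Classical in
/-- The `s`-independence number: the maximum number of vertices of an induced
`K_s`-free subgraph of `G`. -/
noncomputable def alphaS {V : Type*} [Fintype V] (G : SimpleGraph V) (s : ℕ) : ℕ :=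
  ((Finset.univ : Finset (Finset V)).filter
    (fun A : Finset V => (G.induce (A : Set V)).CliqueFree s)).sup Finset.card

lemma le_alphaS {V : Type*} [Fintype V] (G : SimpleGraph V) (s : ℕ) (A : Finset V)
    (h : (G.induce (A : Set V)).CliqueFree s) : A.card ≤ alphaS G s := by
  classical
  unfold alphaS
  exact Finset.le_sup (f := Finset.card) (Finset.mem_filter.mpr ⟨Finset.mem_univ _, h⟩)

/-- If `α_s(G) < f` then every finset of real size at least `f` contains an `s`-clique. -/
lemma exists_clique_of_le_card {V : Type*} [Fintype V] {G : SimpleGraph V} {s : ℕ} {f : ℝ}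
    (hlt : (alphaS G s : ℝ) < f) {A : Finset V} (hA : f ≤ A.card) :
    ∃ S : Finset V, S ⊆ A ∧ G.IsNClique s S := by
  classical
  by_contra hcon
  push_neg at hcon
  have hfree : (G.induce (A : Set V)).CliqueFree s := by
    intro T hT
    refine hcon (T.image Subtype.val) ?_ ?_
    · intro x hx
      obtain ⟨a, _, rfl⟩ := Finset.mem_image.mp hx
      exact a.2
    · constructor
      · intro x hx y hy hxy
        obtain ⟨a, ha, rfl⟩ := Finset.mem_image.mp hx
        obtain ⟨b, hb, rfl⟩ := Finset.mem_image.mp hy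
        have hab : a ≠ b := fun h => hxy (by rw [h])
        exact hT.1 ha hb hab
      · rw [Finset.card_image_of_injective _ Subtype.val_injective]
        exact hT.2
  have h1 := le_alphaS G s A hfree
  have h2 : (A.card : ℝ) ≤ (alphaS G s : ℝ) := by exact_mod_cast h1
  linarith

theorem stmt_8 (s r : ℕ) (δ : ℝ) (hr : 1 ≤ r) (hrs : r ≤ s)
    (hδ0 : 0 < δ) (hδ1 : δ < 1) (n : ℕ) (G : SimpleGraph (Fin n))
    (hG : G.CliqueFree (s + r))
    (hE : (n : ℝ) ^ (2 - (1 - δ) / (⌈((r : ℝ) - δ) / (1 - δ)⌉ : ℝ)) ≤ G.edgeSet.ncard) :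
    (n : ℝ) ^ δ ≤ alphaS G s := by
  classical
  rcases Nat.eq_zero_or_pos n with hn0 | hn
  · subst hn0
    simp only [Nat.cast_zero]
    rw [Real.zero_rpow hδ0.ne']
    exact Nat.cast_nonneg _
  by_contra hcon
  push_neg at hcon
  set f : ℝ := (n : ℝ) ^ δ with hf
  have h1δ : (0 : ℝ) < 1 - δ := by linarith
  have hrδ : (0 : ℝ) < (r : ℝ) - δ := by
    have : (1 : ℝ) ≤ (r : ℝ) := by exact_mod_cast hr
    linarith
  set c : ℤ := ⌈((r : ℝ) - δ) / (1 - δ)⌉ with hc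
  have hcpos : 0 < c := Int.ceil_pos.mpr (div_pos hrδ h1δ)
  set K : ℕ := c.toNat with hK
  have hK1 : 1 ≤ K := by omega
  have hKc : (K : ℝ) = (c : ℝ) := by
    rw [hK]
    exact_mod_cast congrArg (Int.cast : ℤ → ℝ) (Int.toNat_of_nonneg hcpos.le)
  have hKpos : (0 : ℝ) < (K : ℝ) := by exact_mod_cast hK1
  have hKge : ((r : ℝ) - δ) ≤ (K : ℝ) * (1 - δ) := by
    rw [hKc]
    have h := Int.le_ceil (((r : ℝ) - δ) / (1 - δ))
    rw [div_le_iff₀ h1δ] at h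
    exact h
  have hnR : (1 : ℝ) ≤ (n : ℝ) := by exact_mod_cast hn
  have hn0R : (0 : ℝ) < (n : ℝ) := by linarith
  haveI : Nonempty (Fin n) := ⟨⟨0, hn⟩⟩
  -- common neighborhoods
  set N : Finset (Fin n) → Finset (Fin n) :=
    fun R => Finset.univ.filter (fun x => ∀ y ∈ R, G.Adj y x) with hN
  set U : (Fin K → Fin n) → Finset (Fin n) :=
    fun T => Finset.univ.filter (fun v => ∀ i, G.Adj v (T i)) with hU
  set allBad : Finset (Finset (Fin n)) :=
    (Finset.univ.powersetCard r).filter (fun R => ((N R).card : ℝ) < f) with hallBad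
  set bads : (Fin K → Fin n) → Finset (Finset (Fin n)) :=
    fun T => allBad.filter (fun R => R ⊆ U T) with hbads
  -- counting : number of tuples landing in a fixed set
  have count1 : ∀ s0 : Finset (Fin n),
      (Finset.univ.filter (fun T : Fin K → Fin n => ∀ i, T i ∈ s0)).card = s0.card ^ K := by
    intro s0
    have he : (Finset.univ.filter (fun T : Fin K → Fin n => ∀ i, T i ∈ s0)) =
        Fintype.piFinset (fun _ : Fin K => s0) := by
      ext T
      simp [Fintype.mem_piFinset]
    rw [he, Fintype.card_piFinset]
    simp
  -- Σ_T |U T| = Σ_v d(v)^K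
  have sumU : ∑ T : Fin K → Fin n, (U T).card = ∑ v : Fin n, (G.degree v) ^ K := by
    have h1 : ∀ T : Fin K → Fin n, (U T).card =
        ∑ v : Fin n, if (∀ i, G.Adj v (T i)) then 1 else 0 := by
      intro T
      rw [hU]
      exact Finset.card_filter _ _
    rw [Finset.sum_congr rfl (fun T _ => h1 T), Finset.sum_comm]
    refine Finset.sum_congr rfl (fun v _ => ?_)
    rw [← Finset.card_filter]
    have he : (Finset.univ.filter (fun T : Fin K → Fin n => ∀ i, G.Adj v (T i))) =
        (Finset.univ.filter (fun T : Fin K → Fin n => ∀ i, T i ∈ G.neighborFinset v)) := by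
      ext T
      simp [SimpleGraph.mem_neighborFinset]
    rw [he, count1, SimpleGraph.card_neighborFinset_eq_degree]
  -- Σ_T |bads T| = Σ_{R ∈ allBad} |N R|^K
  have sumB : ∑ T : Fin K → Fin n, (bads T).card = ∑ R ∈ allBad, (N R).card ^ K := by
    have h1 : ∀ T : Fin K → Fin n, (bads T).card =
        ∑ R ∈ allBad, if R ⊆ U T then 1 else 0 := by
      intro T
      rw [hbads]
      exact Finset.card_filter _ _
    rw [Finset.sum_congr rfl (fun T _ => h1 T), Finset.sum_comm]
    refine Finset.sum_congr rfl (fun R _ => ?_)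
    rw [← Finset.card_filter]
    have he : (Finset.univ.filter (fun T : Fin K → Fin n => R ⊆ U T)) =
        (Finset.univ.filter (fun T : Fin K → Fin n => ∀ i, T i ∈ N R)) := by
      ext T
      simp only [Finset.mem_filter, Finset.mem_univ, true_and, hU, hN, Finset.subset_iff]
      exact ⟨fun h i y hy => h hy i, fun h y hy i => h i y hy⟩
    rw [he, count1]
  -- sum of degrees
  have hsum_deg : (∑ v : Fin n, (G.degree v : ℝ)) = 2 * (G.edgeSet.ncard : ℝ) := by
    have h1 : G.edgeSet.ncard = G.edgeFinset.card := by
      rw [← SimpleGraph.coe_edgeFinset, Set.ncard_coe_finset]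
    rw [h1]
    rw [← Nat.cast_sum]
    rw [SimpleGraph.sum_degrees_eq_twice_card_edges]
    push_cast
    ring
  set E : ℝ := (G.edgeSet.ncard : ℝ) with hEdef
  have hE' : (n : ℝ) ^ (2 - (1 - δ) / (K : ℝ)) ≤ E := by
    rw [hKc]
    exact hE
  have hEpos : (0 : ℝ) < E :=
    lt_of_lt_of_le (Real.rpow_pos_of_pos hn0R _) hE'
  -- Jensen / power mean
  have hPM : (∑ v : Fin n, (G.degree v : ℝ)) ^ K / (n : ℝ) ^ (K - 1) ≤
      ∑ v : Fin n, (G.degree v : ℝ) ^ K := by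
    have h := pow_sum_div_card_le_sum_pow (s := (Finset.univ : Finset (Fin n)))
      (f := fun v : Fin n => (G.degree v : ℝ)) (fun i _ => by positivity) (K - 1)
    have hK' : K - 1 + 1 = K := Nat.sub_add_cancel hK1
    simpa [hK', Finset.card_univ] using h
  have hrpow_pow : ∀ a : ℝ, ((n : ℝ) ^ a) ^ K = (n : ℝ) ^ (a * K) := by
    intro a
    rw [← Real.rpow_natCast ((n : ℝ) ^ a) K, ← Real.rpow_mul hn0R.le]
  have hSU : 2 * (n : ℝ) ^ ((K : ℝ) + δ) ≤ ∑ v : Fin n, (G.degree v : ℝ) ^ K := by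
    refine le_trans ?_ hPM
    rw [le_div_iff₀ (by positivity)]
    have h2E : 2 * (n : ℝ) ^ (2 - (1 - δ) / (K : ℝ)) ≤ ∑ v : Fin n, (G.degree v : ℝ) := by
      rw [hsum_deg]
      linarith
    have hstep : (2 * (n : ℝ) ^ (2 - (1 - δ) / (K : ℝ))) ^ K ≤
        (∑ v : Fin n, (G.degree v : ℝ)) ^ K := by
      apply pow_le_pow_left₀ (by positivity) h2E
    refine le_trans ?_ hstep
    rw [mul_pow, hrpow_pow]
    have hexp : (2 - (1 - δ) / (K : ℝ)) * K = 2 * K - (1 - δ) := by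
      field_simp
    rw [hexp]
    have hsplit : (n : ℝ) ^ ((K : ℝ) + δ) * (n : ℝ) ^ (K - 1 : ℕ) =
        (n : ℝ) ^ (2 * (K : ℝ) - (1 - δ)) := by
      rw [← Real.rpow_natCast (n : ℝ) (K - 1), ← Real.rpow_add hn0R]
      congr 1
      have : ((K - 1 : ℕ) : ℝ) = (K : ℝ) - 1 := by
        push_cast [Nat.cast_sub hK1]
        ring
      rw [this]
      ring
    calc 2 * (n : ℝ) ^ ((K : ℝ) + δ) * (n : ℝ) ^ (K - 1 : ℕ)
        = 2 * (n : ℝ) ^ (2 * (K : ℝ) - (1 - δ)) := by rw [mul_assoc, hsplit]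
      _ ≤ (2 : ℝ) ^ K * (n : ℝ) ^ (2 * (K : ℝ) - (1 - δ)) := by
          apply mul_le_mul_of_nonneg_right _ (Real.rpow_pos_of_pos hn0R _).le
          exact le_self_pow₀ (by norm_num) (by omega)
  -- upper bound for bad sum
  have hSB : (∑ R ∈ allBad, ((N R).card : ℝ) ^ K) ≤ (n : ℝ) ^ ((K : ℝ) + δ) := by
    have h1 : ∀ R ∈ allBad, ((N R).card : ℝ) ^ K ≤ f ^ K := by
      intro R hR
      have : ((N R).card : ℝ) < f := (Finset.mem_filter.mp hR).2
      exact pow_le_pow_left₀ (Nat.cast_nonneg _) this.le K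
    calc (∑ R ∈ allBad, ((N R).card : ℝ) ^ K)
        ≤ ∑ _R ∈ allBad, f ^ K := Finset.sum_le_sum h1
      _ = (allBad.card : ℝ) * f ^ K := by rw [Finset.sum_const, nsmul_eq_mul]
      _ ≤ (n : ℝ) ^ (r : ℕ) * f ^ K := by
          apply mul_le_mul_of_nonneg_right _ (by positivity)
          have h2 : allBad.card ≤ (Finset.univ.powersetCard r : Finset (Finset (Fin n))).card :=
            Finset.card_filter_le _ _
          have h3 : (Finset.univ.powersetCard r : Finset (Finset (Fin n))).card = n.choose r := by
            rw [Finset.card_powersetCard, Finset.card_univ, Fintype.card_fin]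
          have h4 : allBad.card ≤ n ^ r := by
            rw [h3] at h2
            exact le_trans h2 (Nat.choose_le_pow n r)
          exact_mod_cast h4
      _ = (n : ℝ) ^ ((r : ℝ) + δ * K) := by
          rw [hf, hrpow_pow, ← Real.rpow_natCast (n : ℝ) r, ← Real.rpow_add hn0R]
      _ ≤ (n : ℝ) ^ ((K : ℝ) + δ) := by
          apply Real.rpow_le_rpow_of_exponent_le hnR
          nlinarith [hKge]
  -- find a good tuple
  have key : ∃ T : Fin K → Fin n, f ≤ ((U T).card : ℝ) - ((bads T).card : ℝ) := by
    by_contra hno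
    push_neg at hno
    have hlt : ∑ T : Fin K → Fin n, (((U T).card : ℝ) - ((bads T).card : ℝ)) <
        ∑ _T : Fin K → Fin n, f :=
      Finset.sum_lt_sum_of_nonempty Finset.univ_nonempty (fun T _ => hno T)
    have hrhs : ∑ _T : Fin K → Fin n, f = ((n : ℝ) ^ (K : ℕ)) * f := by
      rw [Finset.sum_const, nsmul_eq_mul, Finset.card_univ]
      congr 2
      simp [Fintype.card_fun]
    have hlhs : ∑ T : Fin K → Fin n, (((U T).card : ℝ) - ((bads T).card : ℝ)) =
        (∑ v : Fin n, (G.degree v : ℝ) ^ K) - (∑ R ∈ allBad, ((N R).card : ℝ) ^ K) := by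
      rw [Finset.sum_sub_distrib]
      congr 1
      · exact_mod_cast congrArg (Nat.cast : ℕ → ℝ) sumU
      · exact_mod_cast congrArg (Nat.cast : ℕ → ℝ) sumB
    have hge : ((n : ℝ) ^ (K : ℕ)) * f ≤
        ∑ T : Fin K → Fin n, (((U T).card : ℝ) - ((bads T).card : ℝ)) := by
      rw [hlhs]
      have hnKf : ((n : ℝ) ^ (K : ℕ)) * f = (n : ℝ) ^ ((K : ℝ) + δ) := by
        rw [hf, ← Real.rpow_natCast (n : ℝ) K, ← Real.rpow_add hn0R]
      rw [hnKf]
      linarith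
    rw [hrhs] at hlt
    linarith
  obtain ⟨T, hT⟩ := key
  -- pick a vertex from each bad set
  set pick : Finset (Fin n) → Fin n :=
    fun R => if h : R.Nonempty then h.choose else ⟨0, hn⟩ with hpick
  set U' : Finset (Fin n) := U T \ (bads T).image pick with hU'
  have hU'card : f ≤ (U'.card : ℝ) := by
    have h1 : (U T).card ≤ U'.card + ((bads T).image pick).card :=
      Finset.card_le_card_sdiff_add_card
    have h2 : ((bads T).image pick).card ≤ (bads T).card := Finset.card_image_le
    have h1' : ((U T).card : ℝ) ≤ (U'.card : ℝ) + (((bads T).image pick).card : ℝ) := by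
      exact_mod_cast h1
    have h2' : (((bads T).image pick).card : ℝ) ≤ ((bads T).card : ℝ) := by exact_mod_cast h2
    linarith
  -- every r-subset of U' has large common neighborhood
  have hgood : ∀ R : Finset (Fin n), R ⊆ U' → R.card = r → f ≤ ((N R).card : ℝ) := by
    intro R hsub hcard
    by_contra hlt'
    push_neg at hlt'
    have hRbad : R ∈ allBad := by
      rw [hallBad]
      refine Finset.mem_filter.mpr ⟨?_, hlt'⟩
      exact Finset.mem_powersetCard.mpr ⟨Finset.subset_univ R, hcard⟩
    have hRbads : R ∈ bads T := by
      rw [hbads]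
      exact Finset.mem_filter.mpr ⟨hRbad, hsub.trans Finset.sdiff_subset⟩
    have hne : R.Nonempty := Finset.card_pos.mp (by omega)
    have hpickR : pick R ∈ R := by
      rw [hpick]
      simp only [dif_pos hne]
      exact hne.choose_spec
    have hmem : pick R ∈ (bads T).image pick := Finset.mem_image_of_mem _ hRbads
    have hinU' : pick R ∈ U' := hsub hpickR
    exact (Finset.mem_sdiff.mp hinU').2 hmem
  -- build the K_{s+r}
  obtain ⟨S, hSU', hS⟩ := exists_clique_of_le_card hcon hU'card
  obtain ⟨R, hRS, hRcard⟩ := Finset.exists_subset_card_eq (s := S) (n := r) (by rw [hS.2]; exact hrs)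
  have hRclique : G.IsClique (R : Set (Fin n)) := hS.1.subset (Finset.coe_subset.mpr hRS)
  have hfN : f ≤ ((N R).card : ℝ) := hgood R (hRS.trans hSU') hRcard
  obtain ⟨S', hS'N, hS'⟩ := exists_clique_of_le_card hcon hfN
  have hNmem : ∀ x ∈ N R, ∀ y ∈ R, G.Adj y x := by
    intro x hx
    rw [hN] at hx
    simp only [Finset.mem_filter, Finset.mem_univ, true_and] at hx
    exact hx
  have hdisj : Disjoint S' R := by
    rw [Finset.disjoint_left]
    intro x hxS' hxR
    exact G.irrefl (hNmem x (hS'N hxS') x hxR)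
  have hunion : G.IsNClique (s + r) (S' ∪ R) := by
    constructor
    · intro x hx y hy hxy
      rw [Finset.coe_union, Set.mem_union] at hx hy
      rcases hx with hx | hx <;> rcases hy with hy | hy
      · exact hS'.1 hx hy hxy
      · exact (hNmem x (hS'N hx) y hy).symm
      · exact hNmem y (hS'N hy) x hx
      · exact hRclique hx hy hxy
    · rw [Finset.card_union_of_disjoint hdisj, hS'.2, hRcard]
  exact hG _ hunion
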